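/- Given a holonomic connection ξ with components ξ^i(t, q^j, q^j_t), the associated dynamic connection γ_ξ with components γ^i_0 = ξ^i - (1/2) q^j_t ∂^t_j ξ^i and γ^i_k = (1/2) ∂^t_k ξ^i is symmetric, i.e., ∂^t_j γ^k_i = ∂^t_i γ^k_j and γ^k_i = ∂^t_i γ^k_0 + q^j_t ∂^t_i γ^k_j, provided ξ^i are twice continuously differentiable in the velocity variables. -/

import Mathlib

/-- Partial derivative in the i-th velocity coordinate. -/
noncomputable def pd {m : ℕ} (f : (Fin m → ℝ) → ℝ) (v : Fin m → ℝ) (i : Fin m) : ℝ :=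
  fderiv ℝ f v (Pi.single i 1)

/- STATEMENT 4: For a holonomic connection ξ (with t, q fixed; ξ^i a C² function
   of the velocities), the dynamic connection γ^i_0 = ξ^i - (1/2) q^j_t ∂^t_j ξ^i,
   γ^i_k = (1/2) ∂^t_k ξ^i is symmetric:
   γ^k_i = ∂^t_i γ^k_0 + q^j_t ∂^t_i γ^k_j and ∂^t_j γ^k_i = ∂^t_i γ^k_j. -/
section helpers
variable {m : ℕ} {f : (Fin m → ℝ) → ℝ}

lemma hEval (hf : ContDiff ℝ 2 f) (v : Fin m → ℝ) (c : Fin m → ℝ) :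
    HasFDerivAt (fun x => fderiv ℝ f x c)
      ((ContinuousLinearMap.apply ℝ ℝ c).comp (fderiv ℝ (fderiv ℝ f) v)) v := by
  have hf' : Differentiable ℝ (fderiv ℝ f) :=
    (hf.fderiv_right (m := 1) (by norm_num)).differentiable (by norm_num)
  exact (ContinuousLinearMap.apply ℝ ℝ c).hasFDerivAt.comp v (hf' v).hasFDerivAt

lemma pd_pd (hf : ContDiff ℝ 2 f) (v : Fin m → ℝ) (i j : Fin m) :
    pd (fun x => pd f x j) v i
      = fderiv ℝ (fderiv ℝ f) v (Pi.single i 1) (Pi.single j 1) := by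
  have h := (hEval hf v (Pi.single j 1)).fderiv
  simp only [pd]
  rw [h]
  rfl

lemma B_symm (hf : ContDiff ℝ 2 f) (v : Fin m → ℝ) (w u : Fin m → ℝ) :
    fderiv ℝ (fderiv ℝ f) v w u = fderiv ℝ (fderiv ℝ f) v u w := by
  have hf' : Differentiable ℝ (fderiv ℝ f) :=
    (hf.fderiv_right (m := 1) (by norm_num)).differentiable (by norm_num)
  exact second_derivative_symmetric
    (fun y => ((hf.differentiable (by norm_num)) y).hasFDerivAt) (hf' v).hasFDerivAt w u

lemma pd_const_mul (hf : ContDiff ℝ 2 f) (c : ℝ) (v : Fin m → ℝ) (i j : Fin m) :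
    pd (fun x => c * pd f x j) v i = c * pd (fun x => pd f x j) v i := by
  simp only [pd]
  rw [fderiv_const_mul (hEval hf v (Pi.single j 1)).differentiableAt]
  simp

lemma pd_gamma0 (hf : ContDiff ℝ 2 f) (v : Fin m → ℝ) (i : Fin m) :
    pd (fun x => f x - (1/2) * ∑ j, x j * pd f x j) v i
      = (1/2) * pd f v i
        - (1/2) * ∑ j, v j * fderiv ℝ (fderiv ℝ f) v (Pi.single i 1) (Pi.single j 1) := by
  have hterm : ∀ j : Fin m, HasFDerivAt (fun x => x j * fderiv ℝ f x (Pi.single j 1))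
      ((v j) • ((ContinuousLinearMap.apply ℝ ℝ (Pi.single j 1)).comp
          (fderiv ℝ (fderiv ℝ f) v))
        + (fderiv ℝ f v (Pi.single j 1)) • (ContinuousLinearMap.proj j)) v := fun j =>
    (ContinuousLinearMap.proj j :
      (Fin m → ℝ) →L[ℝ] ℝ).hasFDerivAt.mul (hEval hf v (Pi.single j 1))
  have htot : HasFDerivAt (fun x => f x - (1/2) * ∑ j, x j * fderiv ℝ f x (Pi.single j 1))
      (fderiv ℝ f v - (1/2 : ℝ) • ∑ j, ((v j) •
          ((ContinuousLinearMap.apply ℝ ℝ (Pi.single j 1)).comp (fderiv ℝ (fderiv ℝ f) v))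
        + (fderiv ℝ f v (Pi.single j 1)) • (ContinuousLinearMap.proj j))) v :=
    ((hf.differentiable (by norm_num) v).hasFDerivAt).sub
      ((HasFDerivAt.fun_sum (fun j _ => hterm j)).const_mul (1/2))
  simp only [pd]
  rw [htot.fderiv]
  simp only [ContinuousLinearMap.sub_apply, ContinuousLinearMap.smul_apply,
    ContinuousLinearMap.sum_apply, ContinuousLinearMap.add_apply,
    ContinuousLinearMap.comp_apply, ContinuousLinearMap.apply_apply,
    ContinuousLinearMap.proj_apply, smul_eq_mul, Pi.single_apply]
  have h2 : ∑ j, (v j * fderiv ℝ (fderiv ℝ f) v (Pi.single i 1) (Pi.single j 1)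
        + fderiv ℝ f v (Pi.single j 1) * if j = i then (1:ℝ) else 0)
      = (∑ j, v j * fderiv ℝ (fderiv ℝ f) v (Pi.single i 1) (Pi.single j 1))
        + fderiv ℝ f v (Pi.single i 1) := by
    rw [Finset.sum_add_distrib]
    congr 1
    simp [mul_ite]
  rw [h2]; ring

end helpers

theorem stmt4 (m : ℕ) (ξ : Fin m → (Fin m → ℝ) → ℝ)
    (hξ : ∀ k, ContDiff ℝ 2 (ξ k))
    (γ : Fin m → Fin m → (Fin m → ℝ) → ℝ)
    (γ0 : Fin m → (Fin m → ℝ) → ℝ)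
    (hγ : ∀ k i v, γ k i v = (1/2) * pd (ξ k) v i)
    (hγ0 : ∀ k v, γ0 k v = ξ k v - (1/2) * ∑ j, v j * pd (ξ k) v j) :
    (∀ k i v, γ k i v = pd (γ0 k) v i + ∑ j, v j * pd (γ k j) v i) ∧
    (∀ k i j v, pd (γ k i) v j = pd (γ k j) v i) := by
  have hγfun : ∀ k j, γ k j = fun x => (1/2) * pd (ξ k) x j := fun k j => funext (hγ k j)
  have hγ0fun : ∀ k, γ0 k = fun x => ξ k x - (1/2) * ∑ j, x j * pd (ξ k) x j :=
    fun k => funext (hγ0 k)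
  constructor
  · intro k i v
    rw [hγ k i v, hγ0fun k]
    have hB : ∀ j, pd (γ k j) v i
        = (1/2) * fderiv ℝ (fderiv ℝ (ξ k)) v (Pi.single i 1) (Pi.single j 1) := by
      intro j
      rw [hγfun k j, pd_const_mul (hξ k) _ v i j, pd_pd (hξ k) v i j]
    simp only [hB]
    rw [pd_gamma0 (hξ k) v i]
    rw [show ∑ j, v j * ((1/2) * fderiv ℝ (fderiv ℝ (ξ k)) v (Pi.single i 1) (Pi.single j 1))
        = (1/2) * ∑ j, v j * fderiv ℝ (fderiv ℝ (ξ k)) v (Pi.single i 1) (Pi.single j 1) by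
      rw [Finset.mul_sum]; exact Finset.sum_congr rfl fun j _ => by ring]
    ring
  · intro k i j v
    rw [hγfun k i, hγfun k j, pd_const_mul (hξ k) _ v j i, pd_const_mul (hξ k) _ v i j,
      pd_pd (hξ k) v j i, pd_pd (hξ k) v i j, B_symm (hξ k) v]
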